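/- Let T : E → F be a positive linear operator (x ≥ 0 implies T(x) ≥ 0). Then there exists a positive linear operator S : G → F such that S(y) = T(y) for all y ∈ E. -/

import Mathlib

open Set Submodule

section HB

variable {V W : Type*} [AddCommGroup V] [Module ℝ V]
  [ConditionallyCompleteLattice W] [AddCommGroup W] [Module ℝ W]
  [CovariantClass W W (· + ·) (· ≤ ·)] [PosSMulMono ℝ W]

/-- One-step extension for the vector-valued Hahn-Banach theorem. -/
theorem hb_step (p : V → W)
    (hp_add : ∀ x y, p (x + y) ≤ p x + p y)
    (hp_smul : ∀ c : ℝ, 0 < c → ∀ x, p (c • x) = c • p x)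
    (f : V →ₗ.[ℝ] W) (hf : ∀ x : f.domain, f x ≤ p (x : V)) (hdom : f.domain ≠ ⊤) :
    ∃ g, f < g ∧ ∀ x : g.domain, g x ≤ p (x : V) := by
  haveI : CovariantClass W W (Function.swap (· + ·)) (· ≤ ·) :=
    ⟨fun a b c h => by
      show b + a ≤ c + a
      rw [add_comm b a, add_comm c a]; exact add_le_add_right h a⟩
  obtain ⟨y, -, hy⟩ : ∃ y ∈ (⊤ : Submodule ℝ V), y ∉ f.domain :=
    SetLike.exists_of_lt (lt_top_iff_ne_top.2 hdom)
  have key : ∀ x1 x2 : f.domain, f x1 - p ((x1 : V) - y) ≤ p ((x2 : V) + y) - f x2 := by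
    intro x1 x2
    rw [sub_le_sub_iff]
    calc f x1 + f x2 = f (x1 + x2) := (f.map_add x1 x2).symm
      _ ≤ p ((x1 : V) + (x2 : V)) := hf _
      _ = p (((x1 : V) - y) + ((x2 : V) + y)) := by congr 1; abel
      _ ≤ p ((x1 : V) - y) + p ((x2 : V) + y) := hp_add _ _
      _ = p ((x2 : V) + y) + p ((x1 : V) - y) := add_comm _ _
  set s : Set W := Set.range fun x : f.domain => f x - p ((x : V) - y) with hs
  have hne : s.Nonempty := ⟨_, ⟨0, rfl⟩⟩
  have hbdd : BddAbove s := by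
    refine ⟨p (((0 : f.domain) : V) + y) - f 0, ?_⟩
    rintro _ ⟨x1, rfl⟩
    exact key x1 0
  set c : W := sSup s with hc
  have hc_ge : ∀ x1 : f.domain, f x1 - p ((x1 : V) - y) ≤ c :=
    fun x1 => le_csSup hbdd ⟨x1, rfl⟩
  have hc_le : ∀ x2 : f.domain, c ≤ p ((x2 : V) + y) - f x2 := by
    intro x2
    refine csSup_le hne ?_
    rintro _ ⟨x1, rfl⟩
    exact key x1 x2
  refine ⟨f.supSpanSingleton y c hy, ?_, ?_⟩
  · refine lt_iff_le_not_ge.2 ⟨f.left_le_sup _ _, fun H => ?_⟩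
    replace H := LinearPMap.domain_mono.monotone H
    rw [LinearPMap.domain_supSpanSingleton, sup_le_iff, span_le, singleton_subset_iff] at H
    exact hy H.2
  · rintro ⟨z, hz⟩
    rcases mem_sup.1 hz with ⟨x', hx', y', hy', rfl⟩
    rcases mem_span_singleton.1 hy' with ⟨t, rfl⟩
    rw [LinearPMap.supSpanSingleton_apply_mk _ _ _ _ _ hx']
    rcases lt_trichotomy t 0 with (ht | ht | ht)
    · have hmt : (0 : ℝ) < -t := neg_pos.2 ht
      have h := hc_ge ((-t)⁻¹ • ⟨x', hx'⟩)
      rw [f.map_smul] at h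
      simp only [SetLike.val_smul] at h
      have h2 := smul_le_smul_of_nonneg_left h hmt.le
      rw [smul_sub, smul_inv_smul₀ hmt.ne'] at h2
      have h3 : (-t) • p ((-t)⁻¹ • x' - y) = p (x' + t • y) := by
        rw [← hp_smul (-t) hmt]
        congr 1
        rw [smul_sub, smul_inv_smul₀ hmt.ne', neg_smul, sub_neg_eq_add]
      rw [h3] at h2
      -- h2 : f ⟨x', hx'⟩ - p (x' + t • y) ≤ (-t) • c
      rw [neg_smul, sub_le_iff_le_add] at h2
      calc (f ⟨x', hx'⟩ : W) + t • c ≤ (-(t • c) + p (x' + t • y)) + t • c :=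
            add_le_add_left h2 _
        _ = p (x' + t • y) := by abel
    · subst ht
      simp only [RingHom.id_apply, zero_smul, add_zero]
      exact hf ⟨x', hx'⟩
    · have h := hc_le (t⁻¹ • ⟨x', hx'⟩)
      rw [f.map_smul] at h
      simp only [SetLike.val_smul] at h
      have h2 := smul_le_smul_of_nonneg_left h ht.le
      rw [smul_sub, smul_inv_smul₀ ht.ne'] at h2
      have h3 : t • p (t⁻¹ • x' + y) = p (x' + t • y) := by
        rw [← hp_smul t ht]
        congr 1
        rw [smul_add, smul_inv_smul₀ ht.ne']
      rw [h3] at h2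
      -- h2 : t • c ≤ p (x' + t • y) - f ⟨x', hx'⟩
      rw [le_sub_iff_add_le, add_comm] at h2
      exact h2

/-- Vector-valued Hahn-Banach theorem with Dedekind complete codomain. -/
theorem hb_extension (p : V → W)
    (hp_add : ∀ x y, p (x + y) ≤ p x + p y)
    (hp_smul : ∀ c : ℝ, 0 < c → ∀ x, p (c • x) = c • p x)
    (f : V →ₗ.[ℝ] W) (hf : ∀ x : f.domain, f x ≤ p (x : V)) :
    ∃ g : V →ₗ[ℝ] W, (∀ x : f.domain, g x = f x) ∧ ∀ x, g x ≤ p x := by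
  set S := { f : V →ₗ.[ℝ] W | ∀ x : f.domain, f x ≤ p (x : V) } with hS
  have hSc : ∀ c, c ⊆ S → IsChain (· ≤ ·) c → ∀ y ∈ c, ∃ ub ∈ S, ∀ z ∈ c, z ≤ ub := by
    intro c hcs c_chain y hy
    have cne : c.Nonempty := ⟨y, hy⟩
    have hcd : DirectedOn (· ≤ ·) c := c_chain.directedOn
    refine ⟨LinearPMap.sSup c hcd, ?_, fun _ ↦ LinearPMap.le_sSup hcd⟩
    rintro ⟨x, hx⟩
    have hdir : DirectedOn (· ≤ ·) (LinearPMap.domain '' c) :=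
      directedOn_image.2 (hcd.mono LinearPMap.domain_mono.monotone)
    rcases (mem_sSup_of_directed (cne.image _) hdir).1 hx with ⟨_, ⟨g, hgc, rfl⟩, hgx⟩
    have hle : g ≤ LinearPMap.sSup c hcd := LinearPMap.le_sSup _ hgc
    convert ← hcs hgc ⟨x, hgx⟩ using 1
    exact hle.2 rfl
  obtain ⟨q, hpq, hqS, hq⟩ := zorn_le_nonempty₀ S hSc f hf
  have hqtop : q.domain = ⊤ := by
    contrapose! hq
    rcases hb_step p hp_add hp_smul q hqS hq with ⟨r, hqr, hr⟩
    exact ⟨r, hr, hqr.le, fun hrq => hqr.ne' <| hrq.antisymm hqr.le⟩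
  obtain ⟨q_dom, qmap⟩ := q
  obtain ⟨hdle, hfg⟩ := hpq
  subst hqtop
  refine ⟨qmap.comp (LinearMap.id.codRestrict ⊤ fun _ => trivial), ?_, ?_⟩
  · exact fun x => (hfg rfl).symm
  · exact fun x => hqS ⟨x, trivial⟩

end HB

theorem stmt9
    {G : Type*} [Lattice G] [AddCommGroup G] [Module ℝ G]
    [CovariantClass G G (· + ·) (· ≤ ·)] [PosSMulMono ℝ G]
    (arch : ∀ x y : G, (∀ n : ℕ, n • x ≤ y) → x ≤ 0)
    (E : Set G)
    (hE0 : (0 : G) ∈ E)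
    (hEadd : ∀ x ∈ E, ∀ y ∈ E, x + y ∈ E)
    (hEsmul : ∀ (c : ℝ), ∀ x ∈ E, c • x ∈ E)
    (hEsup : ∀ x ∈ E, ∀ y ∈ E, x ⊔ y ∈ E)
    (hEinf : ∀ x ∈ E, ∀ y ∈ E, x ⊓ y ∈ E)
    (hdense : ∀ x : G, 0 < x → ∃ y ∈ E, 0 < y ∧ y ≤ x)
    (hmaj : ∀ x : G, ∃ y ∈ E, x ≤ y)
    {F : Type*} [ConditionallyCompleteLattice F] [AddCommGroup F] [Module ℝ F]
    [CovariantClass F F (· + ·) (· ≤ ·)] [PosSMulMono ℝ F]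
    (T : G → F)
    (hT_add : ∀ x ∈ E, ∀ y ∈ E, T (x + y) = T x + T y)
    (hT_smul : ∀ (c : ℝ), ∀ x ∈ E, T (c • x) = c • T x)
    (hT_pos : ∀ x ∈ E, 0 ≤ x → 0 ≤ T x)
    :
    ∃ S : G →ₗ[ℝ] F, (∀ x : G, 0 ≤ x → 0 ≤ S x) ∧ ∀ y ∈ E, S y = T y := by
  classical
  haveI : CovariantClass G G (Function.swap (· + ·)) (· ≤ ·) :=
    ⟨fun a b c h => by
      show b + a ≤ c + a
      rw [add_comm b a, add_comm c a]; exact add_le_add_right h a⟩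
  haveI : CovariantClass F F (Function.swap (· + ·)) (· ≤ ·) :=
    ⟨fun a b c h => by
      show b + a ≤ c + a
      rw [add_comm b a, add_comm c a]; exact add_le_add_right h a⟩
  -- E as a submodule
  let Esub : Submodule ℝ G :=
    { carrier := E
      add_mem' := fun ha hb => hEadd _ ha _ hb
      zero_mem' := hE0
      smul_mem' := fun c x hx => hEsmul c x hx }
  have hT0 : T 0 = 0 := by
    have h := hT_add 0 hE0 0 hE0
    rw [add_zero] at h
    have h2 : T 0 + 0 = T 0 + T 0 := by rw [← h, add_zero]
    exact (add_left_cancel h2).symm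
  have hTmono : ∀ y1 ∈ E, ∀ y2 ∈ E, y1 ≤ y2 → T y1 ≤ T y2 := by
    intro y1 h1 y2 h2 hle
    have hmem : y2 - y1 ∈ E := by
      have := hEadd y2 h2 _ (hEsmul (-1) y1 h1)
      simpa [sub_eq_add_neg] using this
    have hpos : 0 ≤ T (y2 - y1) := hT_pos _ hmem (sub_nonneg.2 hle)
    have heq : T y2 = T y1 + T (y2 - y1) := by
      rw [← hT_add y1 h1 _ hmem]
      congr 1
      abel
    rw [heq]
    exact le_add_of_nonneg_right hpos
  -- the sublinear majorant
  set pset : G → Set F := fun x => T '' {y | y ∈ E ∧ x ≤ y} with hpset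
  have hne : ∀ x, (pset x).Nonempty := by
    intro x
    obtain ⟨y, hyE, hxy⟩ := hmaj x
    exact ⟨T y, ⟨y, ⟨hyE, hxy⟩, rfl⟩⟩
  have hbdd : ∀ x, BddBelow (pset x) := by
    intro x
    obtain ⟨z, hzE, hz⟩ := hmaj (-x)
    refine ⟨-T z, ?_⟩
    rintro _ ⟨y, ⟨hyE, hxy⟩, rfl⟩
    have h0 : (0 : G) ≤ y + z := by
      have := add_le_add hxy hz
      rwa [add_neg_cancel] at this
    have h1 : 0 ≤ T (y + z) := hT_pos _ (hEadd y hyE z hzE) h0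
    rw [hT_add y hyE z hzE] at h1
    -- h1 : 0 ≤ T y + T z
    rwa [← sub_le_iff_le_add, zero_sub] at h1
  set p : G → F := fun x => sInf (pset x) with hp
  have hp_le : ∀ x, ∀ y ∈ E, x ≤ y → p x ≤ T y :=
    fun x y hyE hxy => csInf_le (hbdd x) ⟨y, ⟨hyE, hxy⟩, rfl⟩
  have hp_ge : ∀ x (b : F), (∀ y ∈ E, x ≤ y → b ≤ T y) → b ≤ p x := by
    intro x b hb
    refine le_csInf (hne x) ?_
    rintro _ ⟨y, ⟨hyE, hxy⟩, rfl⟩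
    exact hb y hyE hxy
  have hp_add : ∀ x1 x2, p (x1 + x2) ≤ p x1 + p x2 := by
    intro x1 x2
    have step1 : ∀ y2 ∈ E, x2 ≤ y2 → p (x1 + x2) - T y2 ≤ p x1 := by
      intro y2 hy2 hx2
      refine hp_ge x1 _ ?_
      intro y1 hy1 hx1
      rw [sub_le_iff_le_add]
      have hmem : y1 + y2 ∈ E := hEadd y1 hy1 y2 hy2
      have hle : x1 + x2 ≤ y1 + y2 := add_le_add hx1 hx2
      calc p (x1 + x2) ≤ T (y1 + y2) := hp_le _ _ hmem hle
        _ = T y1 + T y2 := hT_add y1 hy1 y2 hy2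
    have step2 : p (x1 + x2) - p x1 ≤ p x2 := by
      refine hp_ge x2 _ ?_
      intro y2 hy2 hx2
      have := step1 y2 hy2 hx2
      rwa [sub_le_comm] at this
    rw [sub_le_iff_le_add] at step2
    rw [add_comm (p x2) (p x1)] at step2
    exact step2
  have hp_smul_le : ∀ c : ℝ, 0 < c → ∀ x, p (c • x) ≤ c • p x := by
    intro c hc x
    have h1 : c⁻¹ • p (c • x) ≤ p x := by
      refine hp_ge x _ ?_
      intro y hyE hxy
      have hmem : c • y ∈ E := hEsmul c y hyE
      have hle : c • x ≤ c • y := smul_le_smul_of_nonneg_left hxy hc.le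
      have h2 : p (c • x) ≤ T (c • y) := hp_le _ _ hmem hle
      rw [hT_smul c y hyE] at h2
      have h3 := smul_le_smul_of_nonneg_left h2 (inv_nonneg.2 hc.le)
      rwa [inv_smul_smul₀ hc.ne'] at h3
    have h4 := smul_le_smul_of_nonneg_left h1 hc.le
    rwa [smul_inv_smul₀ hc.ne'] at h4
  have hp_smul : ∀ c : ℝ, 0 < c → ∀ x, p (c • x) = c • p x := by
    intro c hc x
    refine le_antisymm (hp_smul_le c hc x) ?_
    have h1 := hp_smul_le c⁻¹ (inv_pos.2 hc) (c • x)
    rw [inv_smul_smul₀ hc.ne'] at h1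
    have h2 := smul_le_smul_of_nonneg_left h1 hc.le
    rwa [smul_inv_smul₀ hc.ne'] at h2
  -- T as a partial linear map with domain Esub
  let f0lin : Esub →ₗ[ℝ] F :=
    { toFun := fun x => T x
      map_add' := fun a b => hT_add a a.2 b b.2
      map_smul' := fun c a => hT_smul c a a.2 }
  let f0 : G →ₗ.[ℝ] F := ⟨Esub, f0lin⟩
  have hf0 : ∀ x : f0.domain, f0 x ≤ p (x : G) := by
    intro x
    refine hp_ge (x : G) _ ?_
    intro y hyE hxy
    exact hTmono _ x.2 y hyE hxy
  obtain ⟨S, hS_eq, hS_le⟩ := hb_extension p hp_add hp_smul f0 hf0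
  refine ⟨S, ?_, ?_⟩
  · intro x hx
    have h1 : S (-x) ≤ p (-x) := hS_le (-x)
    have h2 : p (-x) ≤ T 0 := hp_le (-x) 0 hE0 (neg_nonpos.2 hx)
    rw [hT0] at h2
    have h3 : S (-x) ≤ 0 := h1.trans h2
    rw [map_neg] at h3
    exact neg_nonpos.1 h3
  · intro y hy
    exact hS_eq ⟨y, hy⟩
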